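/- Let G be a finite group, π a set of primes, and α, β characters of G such that χ = αβ is irreducible. Suppose that for every g ∈ G with |α(g)| = α(1), the root of unity α(g)/α(1) has π-number order, and for every g with |β(g)| = β(1), the root of unity β(g)/β(1) has π'-number order. Then ker χ = ker α ∩ ker β. -/

import Mathlib

open CategoryTheory MonoidalCategory FDRep

open Polynomial Matrix in
/-- Roots of the characteristic polynomial of a matrix of finite order are roots of unity. -/
lemma aux_root_pow_eq_one {d : ℕ} (hd : d ≠ 0) {M : Matrix (Fin d) (Fin d) ℂ} {n : ℕ}
    (hM : M ^ n = 1) {μ : ℂ} (hμ : μ ∈ M.charpoly.roots) : μ ^ n = 1 := by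
  have hroot : M.charpoly.IsRoot μ := isRoot_of_mem_roots hμ
  -- the matrix `μ • 1 - M` has determinant zero
  have hdet : (μ • (1 : Matrix (Fin d) (Fin d) ℂ) - M).det = 0 := by
    have hmap : (charmatrix M).map (evalRingHom μ) = μ • (1 : Matrix (Fin d) (Fin d) ℂ) - M := by
      ext i j
      by_cases h : i = j <;>
        simp [charmatrix_apply, Matrix.diagonal, h, Matrix.one_apply, Matrix.smul_apply,
          Matrix.sub_apply]
    have h2 := (RingHom.map_det (evalRingHom μ) (charmatrix M)).symm
    rw [RingHom.mapMatrix_apply] at h2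
    rw [hmap] at h2
    rw [h2]
    simpa [Matrix.charpoly] using hroot
  -- `M - μ • 1` divides `M ^ n - μ ^ n • 1`
  obtain ⟨q, hq⟩ := sub_dvd_pow_sub_pow (X : ℂ[X]) (C μ) n
  have hq' : M ^ n - (algebraMap ℂ (Matrix (Fin d) (Fin d) ℂ) μ) ^ n
      = (M - algebraMap ℂ (Matrix (Fin d) (Fin d) ℂ) μ) * aeval M q := by
    have := congrArg (aeval M) hq
    simpa [map_sub, _root_.map_mul, map_pow] using this
  have hdet2 : (M ^ n - (algebraMap ℂ (Matrix (Fin d) (Fin d) ℂ) μ) ^ n).det = 0 := by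
    rw [hq', Matrix.det_mul]
    have h3 : (M - algebraMap ℂ (Matrix (Fin d) (Fin d) ℂ) μ).det = 0 := by
      have hneg : M - algebraMap ℂ (Matrix (Fin d) (Fin d) ℂ) μ
          = -(μ • (1 : Matrix (Fin d) (Fin d) ℂ) - M) := by
        rw [Algebra.algebraMap_eq_smul_one, neg_sub]
      rw [hneg, Matrix.det_neg, hdet, mul_zero]
    rw [h3, zero_mul]
  rw [hM, Algebra.algebraMap_eq_smul_one] at hdet2
  have hsm : (1 : Matrix (Fin d) (Fin d) ℂ) - (μ • 1) ^ n = (1 - μ ^ n) • 1 := by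
    rw [_root_.smul_pow, one_pow, sub_smul, one_smul]
  rw [hsm, Matrix.det_smul, Matrix.det_one, mul_one] at hdet2
  have h1 : (1 : ℂ) - μ ^ n = 0 :=
    (pow_eq_zero_iff (n := Fintype.card (Fin d)) (by simpa using hd)).mp hdet2
  exact (sub_eq_zero.mp h1).symm

/-- The absolute value of a character value is at most the dimension. -/
lemma aux_abs_char_le {G : Type} [Group G] [Fintype G] (V : FDRep ℂ G) (g : G) :
    ‖V.character g‖ ≤ (Module.finrank ℂ V : ℝ) := by
  classical
  rcases Nat.eq_zero_or_pos (Module.finrank ℂ V) with hd | hd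
  · have hsub : Subsingleton V := Module.finrank_zero_iff.mp hd
    have hz : V.character g = 0 := by
      have h0 : V.ρ g = 0 := Subsingleton.elim _ _
      simp [FDRep.character, h0]
    simp [hz, hd]
  · let b := Module.finBasis ℂ V
    set M := LinearMap.toMatrix b b (V.ρ g) with hMdef
    have hM : M ^ Fintype.card G = 1 := by
      have hρ : (V.ρ g) ^ Fintype.card G = 1 := by
        rw [← map_pow, pow_card_eq_one, map_one]
      have hM2 : M = LinearMap.toMatrixAlgEquiv b (V.ρ g) := rfl
      rw [hM2, ← map_pow, hρ, map_one]
    have htr : V.character g = M.charpoly.roots.sum := by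
      rw [FDRep.character, LinearMap.trace_eq_matrix_trace ℂ b,
        Matrix.trace_eq_sum_roots_charpoly]
    have hcard : (Multiset.card M.charpoly.roots : ℕ) = Module.finrank ℂ V := by
      rw [Polynomial.splits_iff_card_roots.mp (IsAlgClosed.splits _),
        Matrix.charpoly_natDegree_eq_dim, Fintype.card_fin]
    have hb : ∀ x ∈ M.charpoly.roots.map (fun z : ℂ => ‖z‖), x ≤ (1 : ℝ) := by
      intro x hx
      obtain ⟨μ, hμ, rfl⟩ := Multiset.mem_map.mp hx
      have hpow : μ ^ Fintype.card G = 1 := aux_root_pow_eq_one hd.ne' hM hμ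
      have hnp : ‖μ‖ ^ Fintype.card G = 1 := by rw [← norm_pow, hpow, norm_one]
      by_contra hlt
      push_neg at hlt
      have : (1 : ℝ) < ‖μ‖ ^ Fintype.card G := one_lt_pow₀ hlt Fintype.card_ne_zero
      rw [hnp] at this
      exact lt_irrefl _ this
    calc ‖V.character g‖ = ‖M.charpoly.roots.sum‖ := by
          rw [htr]
      _ ≤ (M.charpoly.roots.map (fun z : ℂ => ‖z‖)).sum := norm_multiset_sum_le _
      _ ≤ Multiset.card (M.charpoly.roots.map (fun z : ℂ => ‖z‖)) • (1 : ℝ) :=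
          Multiset.sum_le_card_nsmul _ _ hb
      _ = (Module.finrank ℂ V : ℝ) := by
          rw [Multiset.card_map, hcard]; simp

/-- Let χ = αβ be irreducible, where central values of α are roots of unity of
π-number order and central values of β are roots of unity of π'-number order.
Then ker χ = ker α ∩ ker β. -/
theorem stmt6 (G : Type) [Group G] [Fintype G] (π : Set ℕ) (V W : FDRep ℂ G)
    (hirr : Simple (V ⊗ W))
    (hα : ∀ g : G, ‖V.character g‖ = (Module.finrank ℂ V : ℝ) →
      ∀ ζ : ℂˣ, (ζ : ℂ) = V.character g / V.character 1 →
        ∀ p : ℕ, p.Prime → p ∣ orderOf ζ → p ∈ π)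
    (hβ : ∀ g : G, ‖W.character g‖ = (Module.finrank ℂ W : ℝ) →
      ∀ ζ : ℂˣ, (ζ : ℂ) = W.character g / W.character 1 →
        ∀ p : ℕ, p.Prime → p ∣ orderOf ζ → p ∉ π) :
    {g : G | (V ⊗ W).character g = (V ⊗ W).character 1} =
      {g : G | V.character g = V.character 1} ∩
        {g : G | W.character g = W.character 1} := by
  classical
  -- dimensions are positive, since `V ⊗ W` is simple (hence nonzero)
  have hVW : Module.finrank ℂ ↥(V ⊗ W) ≠ 0 := by
    intro h0
    have hsub : Subsingleton ↥(V ⊗ W) := Module.finrank_zero_iff.mp h0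
    have hid : 𝟙 (V ⊗ W) = 0 := by
      apply Action.hom_ext
      ext v
      exact @Subsingleton.elim _ hsub _ _
    exact CategoryTheory.id_nonzero (V ⊗ W) hid
  have hdim : ((Module.finrank ℂ ↥(V ⊗ W) : ℂ))
      = (Module.finrank ℂ V : ℂ) * (Module.finrank ℂ W : ℂ) := by
    have h2 := congrFun (char_tensor V W) 1
    rw [char_one, Pi.mul_apply, char_one, char_one] at h2
    exact h2
  have ha0 : Module.finrank ℂ V ≠ 0 := by
    intro h0
    apply hVW
    have : ((Module.finrank ℂ ↥(V ⊗ W) : ℂ)) = 0 := by rw [hdim, h0]; simp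
    exact_mod_cast this
  have hb0 : Module.finrank ℂ W ≠ 0 := by
    intro h0
    apply hVW
    have : ((Module.finrank ℂ ↥(V ⊗ W) : ℂ)) = 0 := by rw [hdim, h0]; simp
    exact_mod_cast this
  have hapos : (0 : ℝ) < (Module.finrank ℂ V : ℝ) := by exact_mod_cast Nat.pos_of_ne_zero ha0
  have hbpos : (0 : ℝ) < (Module.finrank ℂ W : ℝ) := by exact_mod_cast Nat.pos_of_ne_zero hb0
  ext g
  simp only [Set.mem_setOf_eq, Set.mem_inter_iff]
  constructor
  · intro h
    have hprod : V.character g * W.character g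
        = (Module.finrank ℂ V : ℂ) * (Module.finrank ℂ W : ℂ) := by
      have h1 := congrFun (char_tensor V W) g
      rw [Pi.mul_apply] at h1
      rw [← h1, h]
      have h2 := congrFun (char_tensor V W) 1
      rw [Pi.mul_apply] at h2
      rw [h2, char_one, char_one]
    have habs : ‖V.character g‖ * ‖W.character g‖
        = (Module.finrank ℂ V : ℝ) * (Module.finrank ℂ W : ℝ) := by
      have h3 := congrArg (‖·‖) hprod
      rw [norm_mul, norm_mul, Complex.norm_natCast, Complex.norm_natCast] at h3
      exact h3
    have hVle := aux_abs_char_le V g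
    have hWle := aux_abs_char_le W g
    have hVnn : (0 : ℝ) ≤ ‖V.character g‖ := norm_nonneg _
    have hWnn : (0 : ℝ) ≤ ‖W.character g‖ := norm_nonneg _
    have haeq : ‖V.character g‖ = (Module.finrank ℂ V : ℝ) := by nlinarith
    have hbeq : ‖W.character g‖ = (Module.finrank ℂ W : ℝ) := by nlinarith
    have haC : ((Module.finrank ℂ V : ℂ)) ≠ 0 := Nat.cast_ne_zero.mpr ha0
    have hbC : ((Module.finrank ℂ W : ℂ)) ≠ 0 := Nat.cast_ne_zero.mpr hb0
    have hunit : (V.character g / (Module.finrank ℂ V : ℂ))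
        * (W.character g / (Module.finrank ℂ W : ℂ)) = 1 := by
      field_simp
      rw [hprod]
    set u : ℂˣ := ⟨V.character g / (Module.finrank ℂ V : ℂ),
      W.character g / (Module.finrank ℂ W : ℂ), hunit, by rw [mul_comm]; exact hunit⟩
      with hudef
    have hV1 : V.character 1 = ((Module.finrank ℂ V : ℂ)) := char_one V
    have hW1 : W.character 1 = ((Module.finrank ℂ W : ℂ)) := char_one W
    have hcoe : (u : ℂ) = V.character g / V.character 1 := by rw [hV1]
    have hcoe' : ((u⁻¹ : ℂˣ) : ℂ) = W.character g / W.character 1 := by rw [hW1]; rfl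
    have key := hα g haeq u hcoe
    have key' := hβ g hbeq u⁻¹ hcoe'
    have hord : orderOf u = 1 := by
      by_contra hne
      obtain ⟨p, hp, hpd⟩ := Nat.exists_prime_and_dvd hne
      exact key' p hp (by rwa [orderOf_inv]) (key p hp hpd)
    have hu1 : u = 1 := orderOf_eq_one_iff.mp hord
    have huc : V.character g / (Module.finrank ℂ V : ℂ) = 1 := by
      have : (u : ℂ) = 1 := by rw [hu1]; rfl
      exact this
    have hVg : V.character g = ((Module.finrank ℂ V : ℂ)) := by
      rwa [div_eq_one_iff_eq haC] at huc
    have hWg : W.character g = ((Module.finrank ℂ W : ℂ)) := by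
      have huc' : W.character g / (Module.finrank ℂ W : ℂ) = 1 := by
        have : ((u⁻¹ : ℂˣ) : ℂ) = 1 := by rw [hu1]; rfl
        exact this
      rwa [div_eq_one_iff_eq hbC] at huc'
    exact ⟨by rw [hVg, hV1], by rw [hWg, hW1]⟩
  · rintro ⟨h1, h2⟩
    have hg := congrFun (char_tensor V W) g
    have h1' := congrFun (char_tensor V W) 1
    rw [hg, h1', Pi.mul_apply, Pi.mul_apply, h1, h2]
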